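/- Let X be a real Hilbert space, let f, g : X → ℝ∪{+∞} be Φ_lsc-convex functions with nonempty effective domains, and let α ∈ ℝ. If there exist φ₁ ∈ supp(f) and φ₂ ∈ supp(g) such that {x : φ₁(x) < α} ∩ {x : φ₂(x) < α} = ∅, then for every ε > 0 there exist x₁ ∈ dom(f) and x₂ ∈ dom(g) such that (0,0) ∈ co(∂^ε_lsc f(x₁) ∪ ∂^ε_lsc g(x₂)) (convex hull taken in ℝ×X). -/

import Mathlib

open scoped RealInnerProductSpace

noncomputable section

/-- The class `Φ_lsc` of continuous functions `x ↦ -a‖x‖² + ⟪v,x⟫ + c` with `a ≥ 0`. -/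
def PhiLsc (X : Type*) [NormedAddCommGroup X] [InnerProductSpace ℝ X] : Set (X → ℝ) :=
  {φ | ∃ a : ℝ, ∃ v : X, ∃ c : ℝ, 0 ≤ a ∧ ∀ x, φ x = -a * ‖x‖ ^ 2 + ⟪v, x⟫ + c}

/-- The support set `supp(f) = {φ ∈ Φ_lsc : φ ≤ f}` of `f : X → ℝ∪{+∞}`. -/
def PhiSupp {X : Type*} [NormedAddCommGroup X] [InnerProductSpace ℝ X] (f : X → EReal) :
    Set (X → ℝ) :=
  {φ | φ ∈ PhiLsc X ∧ ∀ x, (φ x : EReal) ≤ f x}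

/-- The effective domain of `f`. -/
def PhiDom {X : Type*} (f : X → EReal) : Set X := {x | f x < ⊤}

/-- `f` is `Φ_lsc`-convex: it is the pointwise supremum of its support set. -/
def PhiConvexOn {X : Type*} [NormedAddCommGroup X] [InnerProductSpace ℝ X] (f : X → EReal) :
    Prop :=
  ∀ x, f x = ⨆ φ ∈ PhiSupp f, (φ x : EReal)

/-- The set of `ε`-`Φ_lsc`-subgradients of `f` at `xb`:
pairs `(a,v)`, `a ≥ 0`, with `f x - f xb ≥ ⟪v, x - xb⟫ - a‖x‖² + a‖xb‖² - ε` for all `x`. -/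
def SubLscE {X : Type*} [NormedAddCommGroup X] [InnerProductSpace ℝ X] (f : X → EReal)
    (ε : ℝ) (xb : X) : Set (ℝ × X) :=
  {p | 0 ≤ p.1 ∧ ∀ x : X,
    f xb + ((⟪p.2, x - xb⟫ - p.1 * ‖x‖ ^ 2 + p.1 * ‖xb‖ ^ 2 - ε : ℝ) : EReal) ≤ f x}

/-- The set of local `Φ_lsc`-subgradients of `f` at `xb`. -/
def SubLscLoc {X : Type*} [NormedAddCommGroup X] [InnerProductSpace ℝ X] (f : X → EReal)
    (xb : X) : Set (ℝ × X) :=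
  {p | 0 ≤ p.1 ∧ ∃ δ : ℝ, 0 < δ ∧ ∀ x : X, ‖x - xb‖ < δ →
    f xb + ((⟪p.2, x - xb⟫ - p.1 * ‖x‖ ^ 2 + p.1 * ‖xb‖ ^ 2 : ℝ) : EReal) ≤ f x}

/-- `f` is paraconvex (with exponent 2). -/
def ParaconvexOn {X : Type*} [NormedAddCommGroup X] [InnerProductSpace ℝ X]
    (f : X → EReal) : Prop :=
  ∃ C : ℝ, 0 < C ∧ ∀ x y : X, ∀ t : ℝ, t ∈ Set.Icc (0 : ℝ) 1 →
    f (t • x + (1 - t) • y) ≤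
      (t : EReal) * f x + ((1 - t : ℝ) : EReal) * f y + ((C * ‖x - y‖ ^ 2 : ℝ) : EReal)

/-- The proximal subdifferential of `f` at `xb`. -/
def ProxSub {X : Type*} [NormedAddCommGroup X] [InnerProductSpace ℝ X] (f : X → EReal)
    (xb : X) : Set X :=
  {v | ∃ δ : ℝ, 0 < δ ∧ ∃ ρ : ℝ, 0 ≤ ρ ∧ ∀ x : X, ‖x - xb‖ < δ →
    f xb + ((⟪v, x - xb⟫ - ρ / 2 * ‖x - xb‖ ^ 2 : ℝ) : EReal) ≤ f x}

/-- The Dini subdifferential of `f` at `xb`. -/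
def DiniSub {X : Type*} [NormedAddCommGroup X] [InnerProductSpace ℝ X] (f : X → EReal)
    (xb : X) : Set X :=
  {w | ∀ h : X, ∀ t : ℕ → ℝ, ∀ u : ℕ → X, (∀ n, 0 < t n) →
    Filter.Tendsto t Filter.atTop (nhds 0) → Filter.Tendsto u Filter.atTop (nhds h) →
    ((⟪w, h⟫ : ℝ) : EReal) ≤
      Filter.liminf (fun n => (f (xb + t n • u n) - f xb) * (((t n)⁻¹ : ℝ) : EReal)) Filter.atTop}

/-- The `Φ_lsc`-subgradients of a real-valued `f` at `xb`. -/
def SubLscR {X : Type*} [NormedAddCommGroup X] [InnerProductSpace ℝ X] (f : X → ℝ)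
    (xb : X) : Set (ℝ × X) :=
  {p | 0 ≤ p.1 ∧ ∀ x : X,
    ⟪p.2, x - xb⟫ - p.1 * ‖x‖ ^ 2 + p.1 * ‖xb‖ ^ 2 ≤ f x - f xb}

/-- If `f` has an affine minorant with slope `v`, then `v` is an `ε`-subgradient (with `a = 0`)
of `f` at some point of its domain. -/
lemma affine_subgrad {X : Type*} [NormedAddCommGroup X] [InnerProductSpace ℝ X]
    (f : X → EReal) (hfbot : ∀ x, f x ≠ ⊥) (hfdom : (PhiDom f).Nonempty)
    (v : X) (c : ℝ) (hmin : ∀ x, ((⟪v, x⟫ + c : ℝ) : EReal) ≤ f x)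
    (ε : ℝ) (hε : 0 < ε) :
    ∃ x₁ ∈ PhiDom f, ((0 : ℝ), v) ∈ SubLscE f ε x₁ := by
  set T : Set ℝ := (fun x => ⟪v, x⟫ - (f x).toReal) '' PhiDom f with hT
  have hTne : T.Nonempty := hfdom.image _
  have key : ∀ x ∈ PhiDom f, f x = (((f x).toReal : ℝ) : EReal) := fun x hx =>
    (EReal.coe_toReal (ne_of_lt hx) (hfbot x)).symm
  have hreal : ∀ x ∈ PhiDom f, ⟪v, x⟫ + c ≤ (f x).toReal := by
    intro x hx
    have h := hmin x
    rw [key x hx] at h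
    exact_mod_cast h
  have hbdd : BddAbove T := by
    refine ⟨-c, ?_⟩
    rintro y ⟨x, hx, rfl⟩
    have := hreal x hx
    simp only
    linarith
  obtain ⟨y, hyT, hy⟩ := exists_lt_of_lt_csSup hTne
    (show sSup T - ε < sSup T by linarith)
  obtain ⟨x₁, hx₁, rfl⟩ := hyT
  refine ⟨x₁, hx₁, le_refl 0, fun x => ?_⟩
  rcases eq_or_ne (f x) ⊤ with htop | htop
  · rw [htop]; exact le_top
  · have hxdom : x ∈ PhiDom f := Ne.lt_top htop
    have hle : ⟪v, x⟫ - (f x).toReal ≤ sSup T := le_csSup hbdd ⟨x, hxdom, rfl⟩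
    rw [key x hxdom, key x₁ hx₁, ← EReal.coe_add, EReal.coe_le_coe_iff]
    have hsub : ⟪v, x - x₁⟫ = ⟪v, x⟫ - ⟪v, x₁⟫ := inner_sub_right v x x₁
    rw [hsub]
    simp only at hy hle ⊢
    nlinarith [hy, hle]

/-- Convex combination of two members of a set lies in its convex hull. -/
lemma combo_mem {X : Type*} [NormedAddCommGroup X] [InnerProductSpace ℝ X]
    (s : Set (ℝ × X)) (p q : ℝ × X) (hp : p ∈ s) (hq : q ∈ s)
    (l₁ l₂ : ℝ) (h1 : 0 ≤ l₁) (h2 : 0 ≤ l₂) (hs : l₁ + l₂ = 1) :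
    l₁ • p + l₂ • q ∈ convexHull ℝ s :=
  (convex_convexHull ℝ s) (subset_convexHull ℝ s hp) (subset_convexHull ℝ s hq) h1 h2 hs

lemma phi_le_quad {X : Type*} [NormedAddCommGroup X] [InnerProductSpace ℝ X]
    (a : ℝ) (v : X) (c : ℝ) (d : X) (hd : ‖d‖ = 1) (t : ℝ) (ht : 0 ≤ t) :
    -a * ‖t • d‖ ^ 2 + ⟪v, t • d⟫ + c ≤ -a * t ^ 2 + ‖v‖ * t + c := by
  have h1 : ‖t • d‖ = t := by
    rw [norm_smul, hd, mul_one, Real.norm_eq_abs, abs_of_nonneg ht]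
  have h2 : ⟪v, t • d⟫ = t * ⟪v, d⟫ := real_inner_smul_right v d t
  have h3 : ⟪v, d⟫ ≤ ‖v‖ := by
    calc ⟪v, d⟫ ≤ ‖v‖ * ‖d‖ := real_inner_le_norm v d
    _ = ‖v‖ := by rw [hd, mul_one]
  rw [h1, h2]
  nlinarith [mul_le_mul_of_nonneg_left h3 ht]

lemma quad_eventually_lt (a b c α : ℝ) (ha : 0 < a) :
    ∃ T : ℝ, 0 ≤ T ∧ ∀ t, T ≤ t → -a * t ^ 2 + b * t + c < α := by
  refine ⟨max 1 ((b + 1 + |c - α|) / a), le_trans zero_le_one (le_max_left _ _),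
    fun t ht => ?_⟩
  have h1 : (1 : ℝ) ≤ t := le_trans (le_max_left _ _) ht
  have h2 : (b + 1 + |c - α|) / a ≤ t := le_trans (le_max_right _ _) ht
  have h3 : b + 1 + |c - α| ≤ a * t := by
    rw [div_le_iff₀ ha] at h2; linarith
  have h4 : c - α ≤ |c - α| := le_abs_self _
  nlinarith [abs_nonneg (c - α),
    mul_le_mul_of_nonneg_left h3 (le_trans zero_le_one h1)]

lemma exists_inner_eq {X : Type*} [NormedAddCommGroup X] [InnerProductSpace ℝ X]
    (v : X) (hv : v ≠ 0) (m : ℝ) : ∃ x : X, ⟪v, x⟫ = m := by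
  have hn : ‖v‖ ≠ 0 := norm_ne_zero_iff.mpr hv
  refine ⟨(m / ‖v‖ ^ 2) • v, ?_⟩
  rw [real_inner_smul_right, real_inner_self_eq_norm_sq]
  field_simp

/-- if some `φ₁ ∈ supp f`, `φ₂ ∈ supp g` have the intersection property at
level `α`, then for every `ε > 0` the zero subgradient condition holds at some pair of
points of the domains. -/
theorem stmt_14 {X : Type*} [NormedAddCommGroup X] [InnerProductSpace ℝ X] [CompleteSpace X]
    (f g : X → EReal) (hfbot : ∀ x, f x ≠ ⊥) (hgbot : ∀ x, g x ≠ ⊥)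
    (hfdom : (PhiDom f).Nonempty) (hgdom : (PhiDom g).Nonempty)
    (hfconv : PhiConvexOn f) (hgconv : PhiConvexOn g)
    (α : ℝ) (φ₁ : X → ℝ) (hφ₁ : φ₁ ∈ PhiSupp f) (φ₂ : X → ℝ) (hφ₂ : φ₂ ∈ PhiSupp g)
    (hip : {x : X | φ₁ x < α} ∩ {x : X | φ₂ x < α} = ∅) :
    ∀ ε : ℝ, 0 < ε → ∃ x₁ ∈ PhiDom f, ∃ x₂ ∈ PhiDom g,
      ((0, 0) : ℝ × X) ∈ convexHull ℝ (SubLscE f ε x₁ ∪ SubLscE g ε x₂) := by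
  intro ε hε
  obtain ⟨⟨a₁, v₁, c₁, ha₁, hφ₁eq⟩, hφ₁le⟩ := hφ₁
  obtain ⟨⟨a₂, v₂, c₂, ha₂, hφ₂eq⟩, hφ₂le⟩ := hφ₂
  have H : ∀ x, α ≤ φ₁ x ∨ α ≤ φ₂ x := by
    intro x
    by_contra h
    push_neg at h
    exact Set.eq_empty_iff_forall_notMem.mp hip x ⟨h.1, h.2⟩
  have finishF : ∀ c : ℝ, (∀ x : X, ((c : ℝ) : EReal) ≤ f x) →
      ∃ x₁ ∈ PhiDom f, ∃ x₂ ∈ PhiDom g,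
        ((0, 0) : ℝ × X) ∈ convexHull ℝ (SubLscE f ε x₁ ∪ SubLscE g ε x₂) := by
    intro c hc
    obtain ⟨x₁, hx₁, hmem⟩ := affine_subgrad f hfbot hfdom 0 c
      (fun x => by simpa using hc x) ε hε
    exact ⟨x₁, hx₁, hgdom.choose, hgdom.choose_spec,
      subset_convexHull ℝ _ (Or.inl hmem)⟩
  have finishG : ∀ c : ℝ, (∀ x : X, ((c : ℝ) : EReal) ≤ g x) →
      ∃ x₁ ∈ PhiDom f, ∃ x₂ ∈ PhiDom g,
        ((0, 0) : ℝ × X) ∈ convexHull ℝ (SubLscE f ε x₁ ∪ SubLscE g ε x₂) := by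
    intro c hc
    obtain ⟨x₂, hx₂, hmem⟩ := affine_subgrad g hgbot hgdom 0 c
      (fun x => by simpa using hc x) ε hε
    exact ⟨hfdom.choose, hfdom.choose_spec, x₂, hx₂,
      subset_convexHull ℝ _ (Or.inr hmem)⟩
  have minorF : a₁ = 0 → ∀ x, ((⟪v₁, x⟫ + c₁ : ℝ) : EReal) ≤ f x := by
    intro h0 x
    have h := hφ₁le x
    have heq : φ₁ x = ⟪v₁, x⟫ + c₁ := by rw [hφ₁eq x, h0]; ring
    rwa [heq] at h
  have minorG : a₂ = 0 → ∀ x, ((⟪v₂, x⟫ + c₂ : ℝ) : EReal) ≤ g x := by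
    intro h0 x
    have h := hφ₂le x
    have heq : φ₂ x = ⟪v₂, x⟫ + c₂ := by rw [hφ₂eq x, h0]; ring
    rwa [heq] at h
  rcases subsingleton_or_nontrivial X with hsub | hnt
  · -- X is trivial: `φ₁ 0` is a constant minorant of `f`
    refine finishF (φ₁ 0) (fun x => ?_)
    rw [Subsingleton.elim x (0 : X)]
    exact hφ₁le 0
  obtain ⟨y, hy0⟩ := exists_ne (0 : X)
  have heu : ‖(‖y‖⁻¹ • y : X)‖ = 1 := norm_smul_inv_norm hy0
  set e : X := ‖y‖⁻¹ • y with he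
  rcases ha₁.lt_or_eq with ha₁p | ha₁0
  · rcases ha₂.lt_or_eq with ha₂p | ha₂0
    · -- both quadratic: contradiction far along `e`
      exfalso
      obtain ⟨T₁, hT₁0, hT₁⟩ := quad_eventually_lt a₁ ‖v₁‖ c₁ α ha₁p
      obtain ⟨T₂, hT₂0, hT₂⟩ := quad_eventually_lt a₂ ‖v₂‖ c₂ α ha₂p
      set t : ℝ := max T₁ T₂ with ht
      have ht0 : 0 ≤ t := le_trans hT₁0 (le_max_left _ _)
      have h1 : φ₁ (t • e) < α := by
        rw [hφ₁eq (t • e)]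
        exact lt_of_le_of_lt (phi_le_quad a₁ v₁ c₁ e heu t ht0) (hT₁ t (le_max_left _ _))
      have h2 : φ₂ (t • e) < α := by
        rw [hφ₂eq (t • e)]
        exact lt_of_le_of_lt (phi_le_quad a₂ v₂ c₂ e heu t ht0) (hT₂ t (le_max_right _ _))
      rcases H (t • e) with h | h <;> linarith
    · -- a₂ = 0, a₁ > 0 : symmetric to the case below
      by_cases hv₂ : v₂ = 0
      · by_cases hc₂ : α ≤ c₂
        · refine finishG c₂ (fun x => ?_)
          have := minorG ha₂0.symm x
          simpa [hv₂] using this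
        · exfalso
          obtain ⟨T, hT0, hT⟩ := quad_eventually_lt a₁ ‖v₁‖ c₁ α ha₁p
          have h1 : φ₁ (T • e) < α := by
            rw [hφ₁eq (T • e)]
            exact lt_of_le_of_lt (phi_le_quad a₁ v₁ c₁ e heu T hT0) (hT T le_rfl)
          have h2 : φ₂ (T • e) = c₂ := by
            rw [hφ₂eq (T • e), ← ha₂0, hv₂]; simp
          rcases H (T • e) with h | h <;> [linarith; (rw [h2] at h; exact hc₂ h)]
      · exfalso
        have hn : ‖v₂‖ ≠ 0 := norm_ne_zero_iff.mpr hv₂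
        have hnp : (0 : ℝ) < ‖v₂‖ := norm_pos_iff.mpr hv₂
        set d : X := -(‖v₂‖⁻¹ • v₂) with hd
        have hdu : ‖d‖ = 1 := by rw [hd, norm_neg]; exact norm_smul_inv_norm hv₂
        have hvd : ⟪v₂, d⟫ = -‖v₂‖ := by
          rw [hd, inner_neg_right, real_inner_smul_right, real_inner_self_eq_norm_sq]
          field_simp
        obtain ⟨T, hT0, hT⟩ := quad_eventually_lt a₁ ‖v₁‖ c₁ α ha₁p
        set t : ℝ := max T ((c₂ - α + 1) / ‖v₂‖) with ht
        have ht0 : 0 ≤ t := le_trans hT0 (le_max_left _ _)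
        have h1 : φ₁ (t • d) < α := by
          rw [hφ₁eq (t • d)]
          exact lt_of_le_of_lt (phi_le_quad a₁ v₁ c₁ d hdu t ht0) (hT t (le_max_left _ _))
        have h2 : φ₂ (t • d) < α := by
          rw [hφ₂eq (t • d), ← ha₂0, real_inner_smul_right, hvd]
          have : c₂ - α + 1 ≤ t * ‖v₂‖ := by
            rw [← div_le_iff₀ hnp]; exact le_max_right _ _
          nlinarith
        rcases H (t • d) with h | h <;> linarith
  · rcases ha₂.lt_or_eq with ha₂p | ha₂0
    · -- a₁ = 0, a₂ > 0
      by_cases hv₁ : v₁ = 0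
      · by_cases hc₁ : α ≤ c₁
        · refine finishF c₁ (fun x => ?_)
          have := minorF ha₁0.symm x
          simpa [hv₁] using this
        · exfalso
          obtain ⟨T, hT0, hT⟩ := quad_eventually_lt a₂ ‖v₂‖ c₂ α ha₂p
          have h2 : φ₂ (T • e) < α := by
            rw [hφ₂eq (T • e)]
            exact lt_of_le_of_lt (phi_le_quad a₂ v₂ c₂ e heu T hT0) (hT T le_rfl)
          have h1 : φ₁ (T • e) = c₁ := by
            rw [hφ₁eq (T • e), ← ha₁0, hv₁]; simp
          rcases H (T • e) with h | h <;> [(rw [h1] at h; exact hc₁ h); linarith]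
      · exfalso
        have hn : ‖v₁‖ ≠ 0 := norm_ne_zero_iff.mpr hv₁
        have hnp : (0 : ℝ) < ‖v₁‖ := norm_pos_iff.mpr hv₁
        set d : X := -(‖v₁‖⁻¹ • v₁) with hd
        have hdu : ‖d‖ = 1 := by rw [hd, norm_neg]; exact norm_smul_inv_norm hv₁
        have hvd : ⟪v₁, d⟫ = -‖v₁‖ := by
          rw [hd, inner_neg_right, real_inner_smul_right, real_inner_self_eq_norm_sq]
          field_simp
        obtain ⟨T, hT0, hT⟩ := quad_eventually_lt a₂ ‖v₂‖ c₂ α ha₂p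
        set t : ℝ := max T ((c₁ - α + 1) / ‖v₁‖) with ht
        have ht0 : 0 ≤ t := le_trans hT0 (le_max_left _ _)
        have h2 : φ₂ (t • d) < α := by
          rw [hφ₂eq (t • d)]
          exact lt_of_le_of_lt (phi_le_quad a₂ v₂ c₂ d hdu t ht0) (hT t (le_max_left _ _))
        have h1 : φ₁ (t • d) < α := by
          rw [hφ₁eq (t • d), ← ha₁0, real_inner_smul_right, hvd]
          have : c₁ - α + 1 ≤ t * ‖v₁‖ := by
            rw [← div_le_iff₀ hnp]; exact le_max_right _ _
          nlinarith
        rcases H (t • d) with h | h <;> linarith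
    · -- a₁ = a₂ = 0 : both minorants affine
      by_cases hv₁ : v₁ = 0
      · by_cases hc₁ : α ≤ c₁
        · refine finishF c₁ (fun x => ?_)
          have := minorF ha₁0.symm x
          simpa [hv₁] using this
        · by_cases hv₂ : v₂ = 0
          · refine finishG c₂ (fun x => ?_)
            have hφ₁0 : φ₁ (0 : X) = c₁ := by rw [hφ₁eq 0, ← ha₁0, hv₁]; simp
            have hc₂ : α ≤ c₂ := by
              rcases H 0 with h | h
              · rw [hφ₁0] at h; exact absurd h hc₁
              · rw [hφ₂eq 0, ← ha₂0, hv₂] at h; simpa using h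
            have := minorG ha₂0.symm x
            have h2 : ((c₂ : ℝ) : EReal) ≤ g x := by simpa [hv₂] using this
            exact h2
          · exfalso
            obtain ⟨x, hx⟩ := exists_inner_eq v₂ hv₂ (α - c₂ - 1)
            have h2 : φ₂ x < α := by rw [hφ₂eq x, ← ha₂0, hx]; linarith [sq_nonneg ‖x‖]
            have h1 : φ₁ x = c₁ := by rw [hφ₁eq x, ← ha₁0, hv₁]; simp
            rcases H x with h | h
            · rw [h1] at h; exact hc₁ h
            · linarith
      · have hn1 : ‖v₁‖ ≠ 0 := norm_ne_zero_iff.mpr hv₁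
        set r : ℝ := ⟪v₁, v₂⟫ / ‖v₁‖ ^ 2 with hr
        set w : X := v₂ - r • v₁ with hw
        by_cases hw0 : w = 0
        · have hv2 : v₂ = r • v₁ := by
            have : v₂ - r • v₁ = 0 := by rw [← hw]; exact hw0
            exact sub_eq_zero.mp this
          rcases lt_trichotomy r 0 with hrneg | hrz | hrpos
          · -- the genuine two-point case
            obtain ⟨x₁, hx₁, h1⟩ := affine_subgrad f hfbot hfdom v₁ c₁ (minorF ha₁0.symm) ε hε
            obtain ⟨x₂, hx₂, h2⟩ := affine_subgrad g hgbot hgdom v₂ c₂ (minorG ha₂0.symm) ε hε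
            refine ⟨x₁, hx₁, x₂, hx₂, ?_⟩
            have h1r : (0 : ℝ) < 1 - r := by linarith
            have hco : (-r / (1 - r)) • v₁ + (1 / (1 - r)) • v₂ = 0 := by
              rw [hv2, smul_smul, ← add_smul]
              have hz : -r / (1 - r) + 1 / (1 - r) * r = 0 := by field_simp; ring
              rw [hz, zero_smul]
            have heq : ((0, 0) : ℝ × X) =
                (-r / (1 - r)) • ((0 : ℝ), v₁) + (1 / (1 - r)) • ((0 : ℝ), v₂) := by
              rw [Prod.smul_mk, Prod.smul_mk, Prod.mk_add_mk, hco]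
              simp
            rw [heq]
            exact combo_mem _ _ _ (Or.inl h1) (Or.inr h2) _ _
              (div_nonneg (by linarith) (by linarith))
              (div_nonneg (by linarith) (by linarith)) (by field_simp; ring)
          · -- r = 0 : v₂ = 0
            have hv₂ : v₂ = 0 := by rw [hv2, hrz, zero_smul]
            by_cases hc₂ : α ≤ c₂
            · refine finishG c₂ (fun x => ?_)
              have := minorG ha₂0.symm x
              simpa [hv₂] using this
            · exfalso
              obtain ⟨x, hx⟩ := exists_inner_eq v₁ hv₁ (α - c₁ - 1)
              have h1 : φ₁ x < α := by rw [hφ₁eq x, ← ha₁0, hx]; linarith [sq_nonneg ‖x‖]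
              have h2 : φ₂ x = c₂ := by rw [hφ₂eq x, ← ha₂0, hv₂]; simp
              rcases H x with h | h
              · linarith
              · rw [h2] at h; exact hc₂ h
          · -- r > 0 : both go to -∞ along -v₁
            exfalso
            set m : ℝ := min (α - c₁ - 1) ((α - c₂ - 1) / r) with hm
            obtain ⟨x, hx⟩ := exists_inner_eq v₁ hv₁ m
            have hx2 : ⟪v₂, x⟫ = r * m := by
              rw [hv2, real_inner_smul_left, hx]
            have h1 : φ₁ x < α := by
              rw [hφ₁eq x, ← ha₁0, hx]
              have : m ≤ α - c₁ - 1 := min_le_left _ _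
              linarith [sq_nonneg ‖x‖]
            have h2 : φ₂ x < α := by
              rw [hφ₂eq x, ← ha₂0, hx2]
              have hm2 : m ≤ (α - c₂ - 1) / r := min_le_right _ _
              have : r * m ≤ α - c₂ - 1 := by
                rw [← le_div_iff₀' hrpos]; exact hm2
              linarith [sq_nonneg ‖x‖]
            rcases H x with h | h <;> linarith
        · -- w ≠ 0 : can make both small simultaneously
          exfalso
          have hnw : ‖w‖ ≠ 0 := norm_ne_zero_iff.mpr hw0
          have hv₁w : ⟪v₁, w⟫ = 0 := by
            rw [hw, inner_sub_right, real_inner_smul_right, real_inner_self_eq_norm_sq, hr]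
            field_simp
            ring
          have hv₂w : ⟪v₂, w⟫ = ‖w‖ ^ 2 := by
            have hv2' : v₂ = w + r • v₁ := by rw [hw]; abel
            rw [hv2', inner_add_left, real_inner_smul_left, hv₁w, real_inner_self_eq_norm_sq]
            ring
          set s' : ℝ := (α - c₁ - 1) / ‖v₁‖ ^ 2 with hs'
          set u : ℝ := (α - c₂ - 1 - s' * ⟪v₂, v₁⟫) / ‖w‖ ^ 2 with hu
          set x : X := s' • v₁ + u • w with hxdef
          have hx1 : ⟪v₁, x⟫ = α - c₁ - 1 := by
            rw [hxdef, inner_add_right, real_inner_smul_right, real_inner_smul_right,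
              hv₁w, real_inner_self_eq_norm_sq, hs']
            field_simp
            ring
          have hx2 : ⟪v₂, x⟫ = α - c₂ - 1 := by
            rw [hxdef, inner_add_right, real_inner_smul_right, real_inner_smul_right, hv₂w, hu]
            field_simp
            ring
          have h1 : φ₁ x < α := by rw [hφ₁eq x, ← ha₁0, hx1]; linarith [sq_nonneg ‖x‖]
          have h2 : φ₂ x < α := by rw [hφ₂eq x, ← ha₂0, hx2]; linarith [sq_nonneg ‖x‖]
          rcases H x with h | h <;> linarith
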